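/- In the inductive step of the directed Vertex Geography reduction (P-position case): let G be a directed graph with at least 2 vertices in which (G,v) is a normal-play P-position, and let G' be G with a fresh out-neighbour added to every vertex. Then (G',v₁) is a misère P-position: every move to some u₁ leads to a misère N-position (by induction, since the corresponding (G̃,u) is a normal N-position), and the move to v₂ is losing because it ends the game with the opponent unable to move (the opponent wins under misère convention). -/

import Mathlib

universe u
mutual
  inductive GNormalWin {α : Type u} (moves : α → α → Prop) : α → Prop
    | step {p q : α} : moves p q → GNormalLose moves q → GNormalWin moves p
  inductive GNormalLose {α : Type u} (moves : α → α → Prop) : α → Prop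
    | intro {p : α} : (∀ q, moves p q → GNormalWin moves q) → GNormalLose moves p
end

mutual
  inductive GMisereWin {α : Type u} (moves : α → α → Prop) : α → Prop
    | terminal {p : α} : (∀ q, ¬ moves p q) → GMisereWin moves p
    | step {p q : α} : moves p q → GMisereLose moves q → GMisereWin moves p
  inductive GMisereLose {α : Type u} (moves : α → α → Prop) : α → Prop
    | intro {p q₀ : α} : moves p q₀ → (∀ q, moves p q → GMisereWin moves q) → GMisereLose moves p
end

def nimMove {V : Type u} (adj : V → V → Prop) (p q : V × (V → ℕ)) : Prop :=
  adj p.1 q.1 ∧ q.2 p.1 < p.2 p.1 ∧ ∀ v, v ≠ p.1 → q.2 v = p.2 v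

mutual
  inductive NimRMWin {V : Type u} (adj : V → V → Prop) : V × (V → ℕ) → Prop
    | zero {p} : p.2 p.1 = 0 → NimRMWin adj p
    | step {p q} : nimMove adj p q → NimRMLose adj q → NimRMWin adj p
  inductive NimRMLose {V : Type u} (adj : V → V → Prop) : V × (V → ℕ) → Prop
    | intro {p} : p.2 p.1 ≠ 0 → (∀ q, nimMove adj p q → NimRMWin adj q) → NimRMLose adj p
end

def vgMove {V : Type u} (A : V → V → Prop) (p q : Set V × V) : Prop :=
  A p.2 q.2 ∧ q.2 ∈ p.1 ∧ q.2 ≠ p.2 ∧ q.1 = p.1 \ {p.2}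

def addOut {V : Type u} (A : V → V → Prop) : V ⊕ V → V ⊕ V → Prop
  | .inl a, .inl b => A a b
  | .inl a, .inr b => a = b
  | _, _ => False

def MaxMatching {V : Type u} (G : SimpleGraph V) (M : G.Subgraph) : Prop :=
  M.IsMatching ∧ ∀ N : G.Subgraph, N.IsMatching → N.edgeSet.ncard ≤ M.edgeSet.ncard


lemma lift_set {V : Type} (S : Set V) (u : V) :
    ((Sum.inl '' S ∪ Sum.inr '' (Set.univ : Set V)) \ {Sum.inl u} : Set (V ⊕ V))
      = Sum.inl '' (S \ {u}) ∪ Sum.inr '' Set.univ := by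
  ext x
  cases x <;> simp

lemma inr_noMoves {V : Type} (A : V → V → Prop) (T : Set (V ⊕ V)) (w : V) :
    ∀ q, ¬ vgMove (addOut A) (T, Sum.inr w) q := by
  rintro ⟨T', x⟩ ⟨ha, -⟩
  cases x <;> exact ha

theorem mLose {V : Type} (A : V → V → Prop) {p : Set V × V}
    (h : GNormalLose (vgMove A) p) :
    GMisereLose (vgMove (addOut A)) (Sum.inl '' p.1 ∪ Sum.inr '' Set.univ, Sum.inl p.2) := by
  refine GNormalLose.rec
    (motive_1 := fun p _ => GMisereWin (vgMove (addOut A))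
      (Sum.inl '' p.1 ∪ Sum.inr '' Set.univ, Sum.inl p.2))
    (motive_2 := fun p _ => GMisereLose (vgMove (addOut A))
      (Sum.inl '' p.1 ∪ Sum.inr '' Set.univ, Sum.inl p.2))
    ?_ ?_ h
  · intro p q hm _ ih
    obtain ⟨hA, hmem, hne, hset⟩ := hm
    refine GMisereWin.step (q := (Sum.inl '' q.1 ∪ Sum.inr '' Set.univ, Sum.inl q.2)) ?_ ih
    exact ⟨hA, Or.inl ⟨q.2, hmem, rfl⟩, fun he => hne (Sum.inl.inj he),
      by rw [lift_set, hset]⟩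
  · intro p hall ih
    refine GMisereLose.intro
      (q₀ := ((Sum.inl '' p.1 ∪ Sum.inr '' Set.univ) \ {Sum.inl p.2}, Sum.inr p.2))
      ⟨rfl, Or.inr ⟨p.2, trivial, rfl⟩, fun he => Sum.inr_ne_inl he, rfl⟩ ?_
    rintro ⟨T, x⟩ ⟨ha, hmem, hne, hset⟩
    cases x with
    | inr w =>
      exact GMisereWin.terminal (inr_noMoves A T w)
    | inl w =>
      have hwS : w ∈ p.1 := by
        rcases hmem with ⟨a, haS, hab⟩ | ⟨a, -, hab⟩
        · cases hab; exact haS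
        · exact absurd hab (by simp)
      have h2 := ih (p.1 \ {p.2}, w) ⟨ha, hwS, fun he => hne (congrArg Sum.inl he), rfl⟩
      have hT : T = Sum.inl '' (p.1 \ {p.2}) ∪ Sum.inr '' Set.univ :=
        hset.trans (lift_set p.1 p.2)
      rw [hT]
      exact h2

/-- Inductive step of the directed Vertex Geography reduction (`P`-position case): if
`(G,v)` is a normal-play `P`-position then `(G',v₁)` is a misère `P`-position, where `G'`
adds a fresh out-neighbour to each vertex. -/
theorem stmt13 {V : Type} [Fintype V] (hcard : 2 ≤ Fintype.card V) (A : V → V → Prop)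
    (v : V) (hP : GNormalLose (vgMove A) (Set.univ, v)) :
    GMisereLose (vgMove (addOut A)) (Set.univ, Sum.inl v) := by
  have h := mLose A hP
  rwa [show (Sum.inl '' (Set.univ : Set V) ∪ Sum.inr '' Set.univ : Set (V ⊕ V)) = Set.univ from by
    ext x; cases x <;> simp] at h
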